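/- Let p_n^k ⊂ gl_n be the subspace of matrices X with x_{ij} = 0 whenever i ≤ k or j ≥ n−k+1. If f is a polynomial in the matrix entries x_{ij} belonging to the Poisson center of S(p_n^{k−1}) (i.e. Poisson-commuting with all of S(p_n^{k-1})) with respect to the bracket {x_{ij},x_{kl}} = δ_{jk}x_{il} − δ_{li}x_{kj}, then for any g ∈ S(p_n^k), the partial derivative ∂f/∂x_{k,n−k+1} Poisson-commutes with g. -/

import Mathlib

open MvPolynomial

/-- The Kirillov–Kostant Poisson bracket on polynomials in the matrix entries `x_{ij}`,
determined by `{x_{ij}, x_{kl}} = δ_{jk} x_{il} − δ_{li} x_{kj}` and the Leibniz rule. -/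
noncomputable def pb {n : ℕ} (f g : MvPolynomial (Fin n × Fin n) ℝ) :
    MvPolynomial (Fin n × Fin n) ℝ :=
  ∑ i : Fin n, ∑ j : Fin n, ∑ k : Fin n, ∑ l : Fin n,
    ((if j = k then X (i, l) else 0) - (if l = i then X (k, j) else 0)) *
      (pderiv (i, j) f) * (pderiv (k, l) g)

/-- The set of matrix positions of the subalgebra `p_n^k ⊂ gl_n` (0-indexed: rows `≥ k`,
columns `< n − k`; i.e. the first `k` rows and the last `k` columns vanish). -/
def pSet (n k : ℕ) : Set (Fin n × Fin n) :=
  {p : Fin n × Fin n | k ≤ p.1.val ∧ p.2.val < n - k}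

/-- Partial derivatives commute. -/
lemma pderiv_comm' {σ : Type*} [DecidableEq σ] (i j : σ) (f : MvPolynomial σ ℝ) :
    pderiv i (pderiv j f) = pderiv j (pderiv i f) := by
  induction f using MvPolynomial.induction_on' with
  | add p q hp hq => simp [hp, hq]
  | monomial s a =>
    simp only [pderiv_monomial]
    rcases eq_or_ne i j with rfl | hij
    · rfl
    · have h1 : (s - Finsupp.single j 1) - Finsupp.single i 1
          = (s - Finsupp.single i 1) - Finsupp.single j 1 := by
        ext x
        simp only [Finsupp.tsub_apply, Finsupp.single_apply]
        omega
      have h2 : ((s - Finsupp.single j 1 : σ →₀ ℕ) i) = s i := by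
        rw [Finsupp.tsub_apply, Finsupp.single_apply, if_neg (Ne.symm hij), Nat.sub_zero]
      have h3 : ((s - Finsupp.single i 1 : σ →₀ ℕ) j) = s j := by
        rw [Finsupp.tsub_apply, Finsupp.single_apply, if_neg hij, Nat.sub_zero]
      rw [h1, h2, h3]
      ring_nf

/-- A polynomial supported in `s` has vanishing partial derivative in variables outside `s`. -/
lemma pderiv_supported_zero {σ : Type*} {s : Set σ} {g : MvPolynomial σ ℝ}
    (hg : g ∈ MvPolynomial.supported ℝ s) {v : σ} (hv : v ∉ s) : pderiv v g = 0 :=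
  pderiv_eq_zero_of_notMem_vars fun hmem => hv (MvPolynomial.mem_supported.mp hg hmem)

lemma pb_zero_right {n : ℕ} (f : MvPolynomial (Fin n × Fin n) ℝ) : pb f 0 = 0 := by
  simp [pb]

/-- Leibniz-type rule for differentiating the Poisson bracket. -/
lemma pderiv_pb {n : ℕ} (v : Fin n × Fin n) (f g : MvPolynomial (Fin n × Fin n) ℝ) :
    pderiv v (pb f g) =
      (∑ i : Fin n, ∑ j : Fin n, ∑ k : Fin n, ∑ l : Fin n,
        ((if j = k then pderiv v (X (i, l)) else 0) -
            (if l = i then pderiv v (X (k, j)) else 0)) *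
          (pderiv (i, j) f) * (pderiv (k, l) g))
      + pb (pderiv v f) g + pb f (pderiv v g) := by
  unfold pb
  simp only [map_sum, ← Finset.sum_add_distrib]
  refine Finset.sum_congr rfl fun i _ => Finset.sum_congr rfl fun j _ =>
    Finset.sum_congr rfl fun k _ => Finset.sum_congr rfl fun l _ => ?_
  rw [pderiv_mul, pderiv_mul, map_sub, apply_ite (pderiv v), apply_ite (pderiv v),
    map_zero, pderiv_comm' v (i, j) f, pderiv_comm' v (k, l) g]
  ring

/-- If `f` lies in `S(p_n^{k−1})` and Poisson-commutes with all of `S(p_n^{k−1})`, then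
`∂f/∂x_{k,n−k+1}` (0-indexed: `∂f/∂x_{k−1,n−k}`) Poisson-commutes with every
`g ∈ S(p_n^k)`. -/
theorem stmt4 {n k : ℕ} (hk : 1 ≤ k) (hkn : k ≤ n)
    (f : MvPolynomial (Fin n × Fin n) ℝ)
    (hf : f ∈ MvPolynomial.supported ℝ (pSet n (k - 1)))
    (hcen : ∀ h ∈ MvPolynomial.supported ℝ (pSet n (k - 1)), pb f h = 0)
    (g : MvPolynomial (Fin n × Fin n) ℝ)
    (hg : g ∈ MvPolynomial.supported ℝ (pSet n k)) :
    pb (pderiv ((⟨k - 1, by omega⟩ : Fin n), (⟨n - k, by omega⟩ : Fin n)) f) g = 0 := by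
  set A : Fin n × Fin n := ((⟨k - 1, by omega⟩ : Fin n), (⟨n - k, by omega⟩ : Fin n)) with hA
  -- derivatives of g in directions outside pSet n k vanish
  have hgz : ∀ v : Fin n × Fin n, v ∉ pSet n k → pderiv v g = 0 := fun v hv =>
    pderiv_supported_zero hg hv
  -- pderiv A g = 0 since A's row is k-1 < k
  have hAg : pderiv A g = 0 := hgz A (by simp [pSet, hA])
  -- g is also supported in pSet n (k-1)
  have hsub : pSet n k ⊆ pSet n (k - 1) := by
    rintro ⟨p1, p2⟩ ⟨h1, h2⟩
    exact ⟨by omega, by omega⟩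
  have hfg : pb f g = 0 := hcen g (MvPolynomial.supported_mono hsub hg)
  have key := pderiv_pb A f g
  rw [hfg, map_zero, hAg, pb_zero_right, add_zero] at key
  -- the extra (quadratic-in-derivatives) term vanishes
  have hextra : (∑ i : Fin n, ∑ j : Fin n, ∑ k' : Fin n, ∑ l : Fin n,
      ((if j = k' then pderiv A (X (i, l)) else 0) -
          (if l = i then pderiv A (X (k', j)) else 0)) *
        (pderiv (i, j) f) * (pderiv (k', l) g)) = 0 := by
    refine Finset.sum_eq_zero fun i _ => Finset.sum_eq_zero fun j _ =>
      Finset.sum_eq_zero fun k' _ => Finset.sum_eq_zero fun l _ => ?_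
    by_cases hg0 : pderiv (k', l) g = 0
    · rw [hg0, mul_zero]
    · have hmem : (k', l) ∈ pSet n k := by
        by_contra hc
        exact hg0 (hgz _ hc)
      have hm1 : k ≤ k'.val := hmem.1
      have hm2 : l.val < n - k := hmem.2
      have e1 : pderiv A (X (i, l) : MvPolynomial (Fin n × Fin n) ℝ) = 0 := by
        apply pderiv_X_of_ne
        intro he
        have hl : l = A.2 := congrArg Prod.snd he
        rw [hA] at hl
        have hlv : l.val = n - k := by rw [hl]
        omega
      have e2 : pderiv A (X (k', j) : MvPolynomial (Fin n × Fin n) ℝ) = 0 := by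
        apply pderiv_X_of_ne
        intro he
        have hl : k' = A.1 := congrArg Prod.fst he
        rw [hA] at hl
        have hlv : k'.val = k - 1 := by rw [hl]
        omega
      rw [e1, e2]
      simp
  rw [hextra, zero_add] at key
  exact key.symm
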